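/- With notation of the paper, for each level i and each 0 ≤ k ≤ n_i − 2, one has Ψ(f_{i,k+1}) = Ψ(f_{i,k}) + Ψ(−e_{F_{(i_{k+1}, j_{k+1})}}) = d_{i, φ_i(k+2)}; in particular Ψ sends every weight-area normal vector f_{i,k} of S_{w̲} to a weight-inequality normal vector d_{i,·} of C_{w̲}. -/

import Mathlib

namespace GP

/-- Vertices of a pseudoline arrangement: `inl t` is the crossing at position `t`,
`inr k` is the right endpoint `L_k` of pseudoline `l_k` (lines are 0-indexed). -/
abbrev V (n : ℕ) := ℕ ⊕ Fin (n+1)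

variable {n : ℕ}

/-- The permutation sending a line (label) to its height after all crossings of `wd`. -/
def heightPerm (wd : List (Fin n)) : Equiv.Perm (Fin (n+1)) :=
  wd.foldl (fun e i => e.trans (Equiv.swap i.castSucc i.succ)) (Equiv.refl _)

/-- `IsCross wd t a b`: at position `t` the lines `a` (coming in at the lower height) and
`b` (coming in at the upper height) cross. -/
def IsCross (wd : List (Fin n)) (t : ℕ) (a b : Fin (n+1)) : Prop :=
  ∃ h : t < wd.length,
    (heightPerm (wd.take t)).symm (wd.get ⟨t, h⟩).castSucc = a ∧
    (heightPerm (wd.take t)).symm (wd.get ⟨t, h⟩).succ = b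

/-- The (unordered) crossing relation. -/
def Crossing (wd : List (Fin n)) (t : ℕ) (a b : Fin (n+1)) : Prop :=
  IsCross wd t a b ∨ IsCross wd t b a

def OnLine (wd : List (Fin n)) (l : Fin (n+1)) : V n → Prop
  | Sum.inl t => ∃ a b, IsCross wd t a b ∧ (l = a ∨ l = b)
  | Sum.inr k => l = k

/-- Horizontal position of a vertex; right endpoints lie to the right of all crossings. -/
def pos (wd : List (Fin n)) : V n → ℕ
  | Sum.inl t => t
  | Sum.inr _ => wd.length

/-- `u` and `v` are consecutive vertices on the pseudoline `l`, with `u` to the left of `v`. -/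
def EdgeOn (wd : List (Fin n)) (l : Fin (n+1)) (u v : V n) : Prop :=
  OnLine wd l u ∧ OnLine wd l v ∧ pos wd u < pos wd v ∧
    ∀ t : ℕ, pos wd u < t → t < pos wd v → ¬ OnLine wd l (Sum.inl t)

/-- In the orientation of shape `(l_i, l_{i+1})` the lines `l_1, …, l_i` (0-indexed: `0,…,i`)
are oriented right-to-left. -/
def Leftward (i : Fin n) (l : Fin (n+1)) : Prop := l.val ≤ i.val

/-- One step of an oriented path in the arrangement with orientation `(l_i, l_{i+1})`. -/
def Step (wd : List (Fin n)) (i : Fin n) (u v : V n) : Prop :=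
  ∃ l : Fin (n+1),
    (Leftward i l ∧ EdgeOn wd l v u) ∨ (¬ Leftward i l ∧ EdgeOn wd l u v)

/-- The forbidden (non-rigorous) configuration: the path travels straight along `l`
through the crossing of `l` and `l'` while either `l < l'` and both are oriented leftward,
or `l' < l` and both are oriented rightward. -/
def Forbidden (wd : List (Fin n)) (i : Fin n) (x v y : V n) : Prop :=
  ∃ (t : ℕ) (a b l l' : Fin (n+1)), v = Sum.inl t ∧ IsCross wd t a b ∧
    (({l, l'} : Set (Fin (n+1))) = {a, b}) ∧ OnLine wd l x ∧ OnLine wd l y ∧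
    ((l < l' ∧ Leftward i l') ∨ (l' < l ∧ ¬ Leftward i l'))

def Rigorous (wd : List (Fin n)) (i : Fin n) (p : List (V n)) : Prop :=
  ∀ x v y : V n, [x, v, y] <:+: p → ¬ Forbidden wd i x v y

/-- A Gleizer–Postnikov path of shape `(l_i, l_{i+1})` in the pseudoline arrangement of `wd`:
a rigorous oriented path from a source `L_p` with `p ≤ i` to a sink `L_q` with `q ≥ i+1`,
subject to `w(i+1) ≤ w(p), w(q) ≤ w(i)` (where `w` is the permutation of the arrangement). -/
structure IsGPPath (wd : List (Fin n)) (i : Fin n) (p : List (V n)) : Prop where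
  chain : p.Chain' (Step wd i)
  rigorous : Rigorous wd i p
  source : ∃ a : Fin (n+1), p.head? = some (Sum.inr a) ∧ a.val ≤ i.val ∧
    heightPerm wd i.succ ≤ heightPerm wd a ∧ heightPerm wd a ≤ heightPerm wd i.castSucc
  sink : ∃ b : Fin (n+1), p.getLast? = some (Sum.inr b) ∧ i.val < b.val ∧
    heightPerm wd i.succ ≤ heightPerm wd b ∧ heightPerm wd b ≤ heightPerm wd i.castSucc

/-- The path `p` changes from line `l` to line `l'` at the crossing `t`. -/
def changesAt (wd : List (Fin n)) (p : List (V n)) (t : ℕ) (l l' : Fin (n+1)) : Prop :=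
  ∃ x y : V n, [x, Sum.inl t, y] <:+: p ∧ OnLine wd l x ∧ OnLine wd l' y ∧ l ≠ l'

open Classical in
/-- The normal vector `c_p` of a GP-path, as a function on crossing positions:
`+1` at `t` if `p` changes from the smaller-labelled to the larger-labelled line there,
`-1` for the opposite change, `0` otherwise. -/
noncomputable def cvec (wd : List (Fin n)) (p : List (V n)) (t : ℕ) : ℤ :=
  if ∃ a b, IsCross wd t a b ∧ changesAt wd p t (min a b) (max a b) then 1
  else if ∃ a b, IsCross wd t a b ∧ changesAt wd p t (max a b) (min a b) then -1
  else 0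

/-- The (non-weighted) Gleizer–Postnikov cone of a reduced expression. -/
def GPCone (wd : List (Fin n)) : Set (Fin wd.length → ℝ) :=
  {x | ∀ (i : Fin n) (p : List (V n)), IsGPPath wd i p →
    0 ≤ ∑ t : Fin wd.length, (cvec wd p t.val : ℝ) * x t}

/-- `wd` is a reduced expression (of minimal length among all words with the same permutation). -/
def Reduced (wd : List (Fin n)) : Prop :=
  ∀ wd' : List (Fin n), heightPerm wd' = heightPerm wd → wd.length ≤ wd'.length

end GP

namespace GP

variable {n : ℕ}

/-- `z` lies on the lower-left or upper-right side of the crossing `u` of lines `a`, `b`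
(`a` the lower incoming line): i.e. strictly below the horizontal through the crossing. -/
def LowerSide (wd : List (Fin n)) (u : ℕ) (a b : Fin (n+1)) (z : V n) : Prop :=
  (OnLine wd a z ∧ pos wd z < u) ∨ (OnLine wd b z ∧ u < pos wd z)

/-- The path `p` passes through the crossing `u` transversally to the horizontal level of
the crossing (i.e. it crosses from below to above or conversely). -/
def Transversal (wd : List (Fin n)) (p : List (V n)) (u : ℕ) : Prop :=
  ∃ (x y : V n) (a b : Fin (n+1)), IsCross wd u a b ∧ [x, Sum.inl u, y] <:+: p ∧
    (LowerSide wd u a b x ↔ ¬ LowerSide wd u a b y)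

/-- The closure of the path along the right-hand boundary of the arrangement (from sink to
source) crosses the horizontal at level `h`. -/
def ClosureCross (wd : List (Fin n)) (p : List (V n)) (h : Fin n) : Prop :=
  ∃ sa sb : Fin (n+1), p.head? = some (Sum.inr sa) ∧ p.getLast? = some (Sum.inr sb) ∧
    (min (heightPerm wd sa) (heightPerm wd sb)).val ≤ h.val ∧
    h.val < (max (heightPerm wd sa) (heightPerm wd sb)).val

/-- The crossing at position `u` is at level `h`. -/
def LevelIs (wd : List (Fin n)) (u : ℕ) (h : Fin n) : Prop :=
  ∃ hu : u < wd.length, wd.get ⟨u, hu⟩ = h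

open Classical in
/-- Membership of a face in the area `A_p` enclosed on the left by the path `p`
(faces are indexed by `ℕ ⊕ Fin n`: `inl t` is the face bounded on the left by the crossing
`t`, `inr l` is the face unbounded to the left at level `l`). A face lies in `A_p` iff a
ray from the face to the right crosses the closed curve (`p` closed up along the right
boundary) an odd number of times. -/
def Inside (wd : List (Fin n)) (p : List (V n)) : (ℕ ⊕ Fin n) → Prop
  | Sum.inl t => ∃ ht : t < wd.length,
      Odd ((((Finset.range wd.length).filter (fun u =>
          t < u ∧ LevelIs wd u (wd.get ⟨t, ht⟩) ∧ Transversal wd p u)).card)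
        + (if ClosureCross wd p (wd.get ⟨t, ht⟩) then 1 else 0))
  | Sum.inr l =>
      Odd ((((Finset.range wd.length).filter (fun u =>
          LevelIs wd u l ∧ Transversal wd p u)).card)
        + (if ClosureCross wd p l then 1 else 0))

open Classical in
/-- The area vector `e_p = -∑_{F ⊆ A_p} e_F` of a GP-path, on face coordinates. -/
noncomputable def evecW (wd : List (Fin n)) (p : List (V n)) :
    Fin wd.length ⊕ Fin n → ℤ :=
  fun f => if Inside wd p (Sum.map Fin.val id f) then -1 else 0

/-- The path vector `c_p` extended by `0` on the weight coordinates. -/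
noncomputable def cvecW (wd : List (Fin n)) (p : List (V n)) :
    Fin wd.length ⊕ Fin n → ℤ :=
  Sum.elim (fun t : Fin wd.length => cvec wd p t.val) (fun _ => 0)

/-- The weight-inequality vector
`d_{i,k} = c_i - c_{i_k} - 2 ∑_{p > k, s_{i_p} = s_i} c_{i_p} + ∑_{j > k, s_{i_j} = s_{i±1}} c_{i_j}`. -/
def dvec (wd : List (Fin n)) (i : Fin n) (k : ℕ) : Fin wd.length ⊕ Fin n → ℤ
  | Sum.inr j => if j = i then 1 else 0
  | Sum.inl q =>
      if (q : ℕ) = k then -1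
      else if k < (q : ℕ) ∧ wd.get q = i then -2
      else if k < (q : ℕ) ∧ ((wd.get q).val = i.val + 1 ∨ i.val = (wd.get q).val + 1)
        then 1 else 0

/-- The value of `Ψ(-e_{F_t})` (for the face bounded on the left by the crossing `t`) at a
crossing coordinate: `c_t + c_{t'} - ∑ c_u`, where `t'` is the crossing bounding the face
on the right and `u` runs over the crossings bounding the face above and below. -/
def psiCol (wd : List (Fin n)) (t : Fin wd.length) : Fin wd.length ⊕ Fin n → ℤ
  | Sum.inr _ => 0
  | Sum.inl u =>
      (if u = t then 1 else 0)
      + (if (wd.get u = wd.get t ∧ t < u ∧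
            ∀ v : Fin wd.length, t < v → v < u → wd.get v ≠ wd.get t) then 1 else 0)
      + (if (((wd.get u).val = (wd.get t).val + 1 ∨ (wd.get t).val = (wd.get u).val + 1) ∧
            t < u ∧ ∀ v : Fin wd.length, t < v → v < u → wd.get v ≠ wd.get t)
          then -1 else 0)

open Classical in
/-- The matrix of the Chamber-Ansatz type linear map `Ψ` (on basis vectors:
`Ψ(-e_{F_{(i,j)}}) = c_{(i,j)} + c_{(i',j')} - ∑ c_{(i_r,j_r)}` and
`Ψ(-e_{F_i}) = d_{i,k_i}` with `k_i` the first occurrence of the letter `i`). -/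
noncomputable def psiMat (wd : List (Fin n)) :
    Matrix (Fin wd.length ⊕ Fin n) (Fin wd.length ⊕ Fin n) ℤ :=
  Matrix.of fun r s =>
    - (match s with
      | Sum.inl t => psiCol wd t r
      | Sum.inr l => dvec wd l (wd.idxOf l) r)

open Classical in
/-- The weight-area vector `f_{i,k} = -e_{F_i} - ∑_{r=1}^{k} e_{F_{(i_r,j_r)}}` (the face
unbounded to the left at level `i` together with the first `k` bounded faces at level `i`). -/
noncomputable def fvec (wd : List (Fin n)) (i : Fin n) (k : ℕ) :
    Fin wd.length ⊕ Fin n → ℤ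
  | Sum.inr j => if j = i then -1 else 0
  | Sum.inl u => if wd.get u = i ∧
      ((Finset.range u.val).filter (fun v => ∃ hv : v < wd.length, wd.get ⟨v, hv⟩ = i)).card < k
      then -1 else 0

/-- Pairing of an (integral) normal vector with a point. -/
noncomputable def dotI (wd : List (Fin n)) (v : Fin wd.length ⊕ Fin n → ℤ)
    (x : Fin wd.length ⊕ Fin n → ℝ) : ℝ :=
  ∑ s : Fin wd.length ⊕ Fin n, (v s : ℝ) * x s

/-- The weighted Gleizer–Postnikov cone `𝒞_{w̲} ⊆ ℝ^{ℓ(w)+n}` (equivalently, the weighted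
string cone): path inequalities, nonnegativity of the weight coordinates, and the weight
inequalities `d_{i,k}`. -/
noncomputable def CconeW (wd : List (Fin n)) : Set (Fin wd.length ⊕ Fin n → ℝ) :=
  {x | (∀ j : Fin n, 0 ≤ x (Sum.inr j)) ∧
       (∀ (i : Fin n) (p : List (V n)), IsGPPath wd i p → 0 ≤ dotI wd (cvecW wd p) x) ∧
       (∀ k : Fin wd.length, 0 ≤ dotI wd (dvec wd (wd.get k) k.val) x)}

/-- The cone `𝒮_{w̲} ⊆ ℝ^{ℓ(w)+n}`: area inequalities of GP-paths and weight-area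
inequalities `f_{i,k}` for `0 ≤ k ≤ n_i - 1`. -/
noncomputable def SconeW (wd : List (Fin n)) : Set (Fin wd.length ⊕ Fin n → ℝ) :=
  {x | (∀ (i : Fin n) (p : List (V n)), IsGPPath wd i p → 0 ≤ dotI wd (evecW wd p) x) ∧
       (∀ (i : Fin n) (k : ℕ), (k : ℤ) ≤ (wd.count i : ℤ) - 1 →
          0 ≤ dotI wd (fvec wd i k) x)}

/-- The projection `τ` summing the coordinates of all faces at a given level. -/
noncomputable def tau (wd : List (Fin n)) (x : Fin wd.length ⊕ Fin n → ℝ) (i : Fin n) : ℝ :=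
  x (Sum.inr i) + ∑ t : Fin wd.length, if wd.get t = i then x (Sum.inl t) else 0

end GP

open GP

/-- The list of positions of the crossings at level `i`, read from left to right
(so `lvlPos wd i` has length `n_i`, and its `k`-th entry is the paper's `φ_i(k+1)`). -/
def lvlPos {n : ℕ} (wd : List (Fin n)) (i : Fin n) : List (Fin wd.length) :=
  (List.finRange wd.length).filter (fun t => decide (wd.get t = i))


section PsiAux
variable {n : ℕ}

namespace PsiAux

lemma mem_lvlPos {wd : List (Fin n)} {i : Fin n} {t : Fin wd.length} :
    t ∈ lvlPos wd i ↔ wd.get t = i := by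
  simp [lvlPos]

lemma lvlPos_pairwise (wd : List (Fin n)) (i : Fin n) :
    (lvlPos wd i).Pairwise (· < ·) :=
  List.Pairwise.sublist List.filter_sublist (List.pairwise_lt_finRange _)

lemma get_strictMono (wd : List (Fin n)) (i : Fin n) :
    StrictMono (fun m : Fin (lvlPos wd i).length => (lvlPos wd i).get m) := by
  intro a b hab
  exact List.pairwise_iff_get.mp (lvlPos_pairwise wd i) a b hab

lemma get_lt_get_iff (wd : List (Fin n)) (i : Fin n) {a b : Fin (lvlPos wd i).length} :
    (lvlPos wd i).get a < (lvlPos wd i).get b ↔ a < b :=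
  (get_strictMono wd i).lt_iff_lt

lemma get_level (wd : List (Fin n)) (i : Fin n) (a : Fin (lvlPos wd i).length) :
    wd.get ((lvlPos wd i).get a) = i :=
  mem_lvlPos.mp (List.get_mem _ a)

open Classical in
lemma countB_get (wd : List (Fin n)) (i : Fin n) (k : ℕ) (hk : k < (lvlPos wd i).length) :
    ((Finset.range ((lvlPos wd i).get ⟨k, hk⟩).val).filter
      (fun v => ∃ hv : v < wd.length, wd.get ⟨v, hv⟩ = i)).card = k := by
  classical
  have himg : ((Finset.range ((lvlPos wd i).get ⟨k, hk⟩).val).filter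
      (fun v => ∃ hv : v < wd.length, wd.get ⟨v, hv⟩ = i)) =
      Finset.image (fun j : Fin k => ((lvlPos wd i).get ⟨j.val, j.2.trans hk⟩).val)
        Finset.univ := by
    ext v
    simp only [Finset.mem_filter, Finset.mem_range, Finset.mem_image, Finset.mem_univ,
      true_and]
    constructor
    · rintro ⟨hv1, hv2, hv3⟩
      obtain ⟨⟨m, hm⟩, hme⟩ := List.mem_iff_get.mp (mem_lvlPos.mpr hv3)
      have hmk : m < k := by
        by_contra h
        push_neg at h
        have : (lvlPos wd i).get ⟨k, hk⟩ ≤ (lvlPos wd i).get ⟨m, hm⟩ := by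
          rcases eq_or_lt_of_le h with h' | h'
          · simp [Fin.ext_iff, h'.symm] -- careful
          · exact le_of_lt ((get_strictMono wd i) h')
        rw [hme] at this
        exact absurd hv1 (not_lt.mpr this)
      exact ⟨⟨m, hmk⟩, by rw [hme]⟩
    · rintro ⟨j, rfl⟩
      refine ⟨?_, ?_⟩
      · exact_mod_cast (get_strictMono wd i) (show (⟨j.val, j.2.trans hk⟩ : Fin _) < ⟨k, hk⟩ from j.2)
      · exact ⟨((lvlPos wd i).get ⟨j.val, j.2.trans hk⟩).2, by simpa using get_level wd i ⟨j.val, j.2.trans hk⟩⟩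
  rw [himg, Finset.card_image_of_injective _ ?_, Finset.card_univ, Fintype.card_fin]
  intro a b hab
  have := Fin.val_injective hab
  have : (⟨a.val, a.2.trans hk⟩ : Fin (lvlPos wd i).length) = ⟨b.val, b.2.trans hk⟩ :=
    (get_strictMono wd i).injective this
  exact Fin.ext (by simpa [Fin.ext_iff] using this)




lemma psiMat_apply_inl (wd : List (Fin n)) (r : Fin wd.length ⊕ Fin n) (t : Fin wd.length) :
    psiMat wd r (Sum.inl t) = -(psiCol wd t r) := rfl

lemma psiMat_apply_inr (wd : List (Fin n)) (r : Fin wd.length ⊕ Fin n) (l : Fin n) :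
    psiMat wd r (Sum.inr l) = -(dvec wd l (wd.idxOf l) r) := rfl

lemma mulVec_neg_single (wd : List (Fin n)) (s0 : Fin wd.length ⊕ Fin n) :
    (psiMat wd).mulVec (-(Pi.single s0 1)) = fun r => -(psiMat wd r s0) := by
  classical
  funext r
  rw [Matrix.mulVec_neg]
  simp [Matrix.mulVec_single]

lemma fvec_zero (wd : List (Fin n)) (i : Fin n) :
    fvec wd i 0 = -(Pi.single (Sum.inr i) 1) := by
  classical
  funext s
  cases s with
  | inl u => simp [fvec, Pi.single_apply]
  | inr j =>
    simp only [fvec, Pi.neg_apply, Pi.single_apply, Sum.inr.injEq]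
    split_ifs <;> norm_num

lemma indexOf_eq_get_zero (wd : List (Fin n)) (i : Fin n)
    (h0 : 0 < (lvlPos wd i).length) :
    wd.idxOf i = ((lvlPos wd i).get ⟨0, h0⟩).val := by
  classical
  set t0 : Fin wd.length := (lvlPos wd i).get ⟨0, h0⟩ with ht0
  have hlvl : wd.get t0 = i := get_level wd i ⟨0, h0⟩
  rw [List.idxOf]
  rw [List.findIdx_eq t0.isLt]
  constructor
  · simpa using hlvl
  · intro j hj
    simp only [beq_eq_false_iff_ne, ne_eq]
    intro hje
    have hjlt : j < wd.length := lt_trans hj t0.isLt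
    obtain ⟨⟨m, hm⟩, hme⟩ := List.mem_iff_get.mp
      (mem_lvlPos.mpr (show wd.get ⟨j, hjlt⟩ = i from hje))
    have : t0 ≤ (lvlPos wd i).get ⟨m, hm⟩ := by
      rcases Nat.eq_zero_or_pos m with h | h
      · subst h; exact le_of_eq (by rw [ht0])
      · exact le_of_lt ((get_strictMono wd i) (show (⟨0, h0⟩ : Fin _) < ⟨m, hm⟩ from h))
    rw [hme] at this
    exact absurd hj (not_lt.mpr this)
lemma fvec_succ (wd : List (Fin n)) (i : Fin n) (k : ℕ) (hk : k < (lvlPos wd i).length) :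
    fvec wd i (k+1) = fvec wd i k - Pi.single (Sum.inl ((lvlPos wd i).get ⟨k, hk⟩)) 1 := by
  classical
  funext s
  cases s with
  | inr j => simp [fvec, Pi.single_apply]
  | inl u =>
    have hlvl := get_level wd i ⟨k, hk⟩
    by_cases hu : wd.get u = i
    · obtain ⟨⟨m, hm⟩, hme⟩ := List.mem_iff_get.mp (mem_lvlPos.mpr hu)
      have hcount : ((Finset.range u.val).filter
          (fun v => ∃ hv : v < wd.length, wd.get ⟨v, hv⟩ = i)).card = m := by
        rw [← hme]; exact countB_get wd i m hm
      have hiff : u = (lvlPos wd i).get ⟨k, hk⟩ ↔ m = k := by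
        rw [← hme]
        constructor
        · intro h
          have := (get_strictMono wd i).injective h
          simpa [Fin.ext_iff] using this
        · intro h
          subst h
          rfl
      simp only [fvec, Pi.sub_apply, Pi.single_apply, hcount, hu, true_and, Sum.inl.injEq,
        hiff]
      split_ifs <;> omega
    · have hne : u ≠ (lvlPos wd i).get ⟨k, hk⟩ := fun h => hu (h ▸ hlvl)
      simp [fvec, Pi.single_apply, hne, show ¬ wd[(u : ℕ)] = i from hu]
      exact hne
lemma dvec_step (wd : List (Fin n)) (i : Fin n) (t t' : Fin wd.length)
    (ht : wd.get t = i) (ht' : wd.get t' = i) (htt : t < t')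
    (hbet : ∀ v : Fin wd.length, t < v → v < t' → wd.get v ≠ i)
    (r : Fin wd.length ⊕ Fin n) :
    dvec wd i t'.val r = dvec wd i t.val r + psiCol wd t r := by
  classical
  have htg : wd[(t : ℕ)] = i := ht
  have ht'g : wd[(t' : ℕ)] = i := ht'
  have httv : (t : ℕ) < (t' : ℕ) := htt
  cases r with
  | inr j => simp [dvec, psiCol]
  | inl q =>
    simp only [dvec, psiCol, List.get_eq_getElem]
    simp only [htg]
    rcases lt_trichotomy (q : ℕ) (t : ℕ) with hq | hq | hq
    · -- q < t
      rw [if_neg (show ¬ (q : ℕ) = (t' : ℕ) by omega),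
        if_neg (show ¬ ((t' : ℕ) < (q : ℕ) ∧ wd[(q : ℕ)] = i) from fun h => by omega),
        if_neg (show ¬ ((t' : ℕ) < (q : ℕ) ∧ _) from fun h => by have := h.1; omega),
        if_neg (show ¬ (q : ℕ) = (t : ℕ) by omega),
        if_neg (show ¬ ((t : ℕ) < (q : ℕ) ∧ wd[(q : ℕ)] = i) from fun h => by have := h.1; omega),
        if_neg (show ¬ ((t : ℕ) < (q : ℕ) ∧ _) from fun h => by have := h.1; omega),
        if_neg (show ¬ q = t from fun h => by rw [h] at hq; omega),
        if_neg (show ¬ (wd[(q : ℕ)] = i ∧ t < q ∧ _) from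
          fun h => absurd (show (t : ℕ) < (q : ℕ) from h.2.1) (by omega)),
        if_neg (show ¬ (_ ∧ t < q ∧ _) from
          fun h => absurd (show (t : ℕ) < (q : ℕ) from h.2.1) (by omega))]
      norm_num
    · -- q = t
      have hqt : q = t := Fin.ext hq
      subst hqt
      rw [if_neg (show ¬ (q : ℕ) = (t' : ℕ) by omega),
        if_neg (show ¬ ((t' : ℕ) < (q : ℕ) ∧ wd[(q : ℕ)] = i) from fun h => by have := h.1; omega),
        if_neg (show ¬ ((t' : ℕ) < (q : ℕ) ∧ _) from fun h => by have := h.1; omega),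
        if_pos (show (q : ℕ) = (q : ℕ) from rfl),
        if_pos (show q = q from rfl),
        if_neg (show ¬ (wd[(q : ℕ)] = i ∧ q < q ∧ _) from
          fun h => absurd (show (q : ℕ) < (q : ℕ) from h.2.1) (by omega)),
        if_neg (show ¬ (_ ∧ q < q ∧ _) from
          fun h => absurd (show (q : ℕ) < (q : ℕ) from h.2.1) (by omega))]
      norm_num
    · rcases lt_trichotomy (q : ℕ) (t' : ℕ) with hq' | hq' | hq'
      · -- t < q < t'
        have hqi : ¬ wd[(q : ℕ)] = i := hbet q hq hq'
        have hB : ∀ v : Fin wd.length, t < v → v < q → ¬ wd[(v : ℕ)] = i :=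
          fun v hv1 hv2 => hbet v hv1 (lt_trans hv2 (show q < t' from hq'))
        rw [if_neg (show ¬ (q : ℕ) = (t' : ℕ) by omega),
          if_neg (show ¬ ((t' : ℕ) < (q : ℕ) ∧ wd[(q : ℕ)] = i) from fun h => by have := h.1; omega),
          if_neg (show ¬ ((t' : ℕ) < (q : ℕ) ∧ _) from fun h => by have := h.1; omega),
          if_neg (show ¬ (q : ℕ) = (t : ℕ) by omega),
          if_neg (show ¬ ((t : ℕ) < (q : ℕ) ∧ wd[(q : ℕ)] = i) from fun h => hqi h.2),
          if_neg (show ¬ q = t from fun h => by rw [h] at hq; omega),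
          if_neg (show ¬ (wd[(q : ℕ)] = i ∧ t < q ∧ _) from fun h => hqi h.1)]
        by_cases hadj : (wd[(q : ℕ)] : ℕ) = (i : ℕ) + 1 ∨ (i : ℕ) = (wd[(q : ℕ)] : ℕ) + 1
        · rw [if_pos (And.intro hq hadj), if_pos (And.intro hadj (And.intro (show t < q from hq) hB))]
          norm_num
        · rw [if_neg (show ¬ ((t : ℕ) < (q : ℕ) ∧ _) from fun h => hadj h.2),
            if_neg (show ¬ (_ ∧ t < q ∧ _) from fun h => hadj h.1)]
          norm_num
      · -- q = t'
        have hqt' : q = t' := Fin.ext hq'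
        subst hqt'
        have hB : ∀ v : Fin wd.length, t < v → v < q → ¬ wd[(v : ℕ)] = i :=
          fun v hv1 hv2 => hbet v hv1 hv2
        rw [if_pos (show (q : ℕ) = (q : ℕ) from rfl),
          if_neg (show ¬ (q : ℕ) = (t : ℕ) by omega),
          if_pos (And.intro (show (t : ℕ) < (q : ℕ) from hq) ht'g),
          if_neg (show ¬ q = t from fun h => by rw [h] at hq; omega),
          if_pos (And.intro ht'g (And.intro (show t < q from hq) hB)),
          if_neg (show ¬ (((wd[(q : ℕ)] : ℕ) = (i : ℕ) + 1 ∨ (i : ℕ) = (wd[(q : ℕ)] : ℕ) + 1) ∧ t < q ∧ _) from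
            fun h => by have := h.1; rw [ht'g] at this; omega)]
        norm_num
      · -- t' < q
        have hB : ¬ ∀ v : Fin wd.length, t < v → v < q → ¬ wd[(v : ℕ)] = i :=
          fun h => h t' htt (show t' < q from hq') ht'g
        rw [if_neg (show ¬ (q : ℕ) = (t' : ℕ) by omega),
          if_neg (show ¬ (q : ℕ) = (t : ℕ) by omega),
          if_neg (show ¬ q = t from fun h => by rw [h] at hq; omega),
          if_neg (show ¬ (wd[(q : ℕ)] = i ∧ t < q ∧ _) from fun h => hB h.2.2),
          if_neg (show ¬ (_ ∧ t < q ∧ (∀ v : Fin wd.length, t < v → v < q → ¬ wd[(v : ℕ)] = i)) from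
            fun h => hB h.2.2)]
        by_cases hqi : wd[(q : ℕ)] = i
        · rw [if_pos (And.intro (show (t' : ℕ) < (q : ℕ) from hq') hqi),
            if_pos (And.intro (show (t : ℕ) < (q : ℕ) from hq) hqi)]
          norm_num
        · rw [if_neg (show ¬ ((t' : ℕ) < (q : ℕ) ∧ wd[(q : ℕ)] = i) from fun h => hqi h.2),
            if_neg (show ¬ ((t : ℕ) < (q : ℕ) ∧ wd[(q : ℕ)] = i) from fun h => hqi h.2)]
          by_cases hadj : (wd[(q : ℕ)] : ℕ) = (i : ℕ) + 1 ∨ (i : ℕ) = (wd[(q : ℕ)] : ℕ) + 1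
          · rw [if_pos (And.intro (show (t' : ℕ) < (q : ℕ) from hq') hadj),
              if_pos (And.intro (show (t : ℕ) < (q : ℕ) from hq) hadj)]
            norm_num
          · rw [if_neg (show ¬ ((t' : ℕ) < (q : ℕ) ∧ _) from fun h => hadj h.2),
              if_neg (show ¬ ((t : ℕ) < (q : ℕ) ∧ _) from fun h => hadj h.2)]
            norm_num
lemma mulVec_fvec_key (wd : List (Fin n)) (i : Fin n) :
    ∀ k : ℕ, ∀ hk : k < (lvlPos wd i).length,
      (psiMat wd).mulVec (fvec wd i k) = dvec wd i ((lvlPos wd i).get ⟨k, hk⟩).val := by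
  intro k
  induction k with
  | zero =>
    intro hk
    rw [fvec_zero, mulVec_neg_single]
    funext r
    rw [psiMat_apply_inr, neg_neg, indexOf_eq_get_zero wd i hk]
  | succ k ih =>
    intro hk
    have hk' : k < (lvlPos wd i).length := Nat.lt_of_succ_lt hk
    have hstep : fvec wd i (k+1) =
        fvec wd i k + (-(Pi.single (Sum.inl ((lvlPos wd i).get ⟨k, hk'⟩)) 1)) := by
      rw [fvec_succ wd i k hk', sub_eq_add_neg]
    rw [hstep, Matrix.mulVec_add, ih hk', mulVec_neg_single]
    funext r
    rw [Pi.add_apply, psiMat_apply_inl, neg_neg]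
    exact (dvec_step wd i ((lvlPos wd i).get ⟨k, hk'⟩) ((lvlPos wd i).get ⟨k+1, hk⟩)
      (get_level _ _ _) (get_level _ _ _)
      (get_strictMono wd i (show (⟨k, hk'⟩ : Fin _) < ⟨k+1, hk⟩ from Nat.lt_succ_self k))
      (by
        intro v hv1 hv2 hvi
        obtain ⟨⟨m, hm⟩, hme⟩ := List.mem_iff_get.mp (mem_lvlPos.mpr hvi)
        rw [← hme] at hv1 hv2
        have h1 : (⟨k, hk'⟩ : Fin (lvlPos wd i).length) < ⟨m, hm⟩ :=
          (get_lt_get_iff wd i).mp hv1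
        have h2 : (⟨m, hm⟩ : Fin (lvlPos wd i).length) < ⟨k+1, hk⟩ :=
          (get_lt_get_iff wd i).mp hv2
        simp only [Fin.mk_lt_mk] at h1 h2
        omega) r).symm

end PsiAux

end PsiAux

/-- **`Ψ` maps the weight-area vectors to the weight-inequality vectors.**
For each level `i` and each `0 ≤ k ≤ n_i - 2`:
`Ψ(f_{i,k+1}) = Ψ(f_{i,k}) + Ψ(-e_{F_{(i_{k+1},j_{k+1})}}) = d_{i, φ_i(k+2)}`;
and in particular `Ψ` sends every weight-area normal vector `f_{i,k}`, `0 ≤ k ≤ n_i - 1`,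
to the weight-inequality normal vector `d_{i, φ_i(k+1)}` of `𝒞_{w̲}`. -/
theorem psi_fvec_eq_dvec {n : ℕ} (wd : List (Fin n)) (hred : Reduced wd) (i : Fin n) :
    (∀ k : ℕ, ∀ hk : k + 1 < (lvlPos wd i).length,
      (psiMat wd).mulVec (fvec wd i (k+1)) =
        (psiMat wd).mulVec (fvec wd i k) +
          (psiMat wd).mulVec
            (-(Pi.single (Sum.inl ((lvlPos wd i).get ⟨k, Nat.lt_of_succ_lt hk⟩)) 1)) ∧
      (psiMat wd).mulVec (fvec wd i (k+1)) =
        dvec wd i ((lvlPos wd i).get ⟨k+1, hk⟩).val) ∧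
    (∀ k : ℕ, ∀ hk : k < (lvlPos wd i).length,
      (psiMat wd).mulVec (fvec wd i k) = dvec wd i ((lvlPos wd i).get ⟨k, hk⟩).val) := by
  classical
  refine ⟨fun k hk => ⟨?_, PsiAux.mulVec_fvec_key wd i (k+1) hk⟩,
    fun k hk => PsiAux.mulVec_fvec_key wd i k hk⟩
  have hk' : k < (lvlPos wd i).length := Nat.lt_of_succ_lt hk
  rw [PsiAux.fvec_succ wd i k hk', sub_eq_add_neg, Matrix.mulVec_add]
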